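/- Let D' be a pretriangulated category and let D ⊆ D' be a left-admissible full triangulated subcategory. Then the inclusion functor ^⊥D ↪ D' of the left orthogonal admits a right adjoint R : D' → ^⊥D; the restriction of R to the right orthogonal D^⊥ is a fully faithful functor D^⊥ → ^⊥D; and this restriction is an equivalence of categories if and only if D is right admissible in D'. -/

import Mathlib

/-!
STATEMENT 0: Let D' be a pretriangulated category and let D ⊆ D' be a left-admissible full
triangulated subcategory. Then the inclusion functor `^⊥D ↪ D'` of the left orthogonal admits
a right adjoint `R : D' → ^⊥D`; the restriction of `R` to the right orthogonal `D^⊥` is a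
fully faithful functor `D^⊥ → ^⊥D`; and this restriction is an equivalence of categories if
and only if `D` is right admissible in `D'`.
-/

open CategoryTheory Limits CategoryTheory.Pretriangulated

/-- The left orthogonal `^⊥D` of a (full triangulated) subcategory given by an object
predicate `P`: objects `M` with `Hom(M, N) = 0` for every `N` satisfying `P`. -/
def leftOrthogonal {D' : Type*} [Category D'] [Preadditive D'] (P : D' → Prop) :
    D' → Prop :=
  fun M => ∀ (N : D'), P N → ∀ f : M ⟶ N, f = 0

/-- The right orthogonal `D^⊥` of a (full triangulated) subcategory given by an object
predicate `P`: objects `M` with `Hom(N, M) = 0` for every `N` satisfying `P`. -/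
def rightOrthogonal {D' : Type*} [Category D'] [Preadditive D'] (P : D' → Prop) :
    D' → Prop :=
  fun M => ∀ (N : D'), P N → ∀ f : N ⟶ M, f = 0

namespace Stmt0Aux

set_option linter.unusedSectionVars false

universe w z

section Adj

variable {C : Type w} [Category.{z} C]
variable (Q : C → Prop)
variable (k : C → C) (hk : ∀ M, Q (k M)) (ε : ∀ M, k M ⟶ M)
variable (uni : ∀ M (X : C), Q X → Function.Bijective (fun g : X ⟶ k M => g ≫ ε M))

/-- The lifting of a morphism along the universal morphism `ε M`. -/
noncomputable def lift {M X : C} (hX : Q X) (φ : X ⟶ M) : X ⟶ k M :=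
  (Equiv.ofBijective _ (uni M X hX)).symm φ

@[simp] lemma lift_fac {M X : C} (hX : Q X) (φ : X ⟶ M) :
    lift Q k ε uni hX φ ≫ ε M = φ :=
  (Equiv.ofBijective _ (uni M X hX)).apply_symm_apply φ

lemma lift_uniq {M X : C} (hX : Q X) (φ : X ⟶ M) (g : X ⟶ k M) (h : g ≫ ε M = φ) :
    g = lift Q k ε uni hX φ := by
  apply (uni M X hX).injective
  show g ≫ ε M = lift Q k ε uni hX φ ≫ ε M
  rw [h, lift_fac]

/-- The right adjoint to the inclusion, constructed from pointwise universal morphisms. -/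
noncomputable def RA : C ⥤ ObjectProperty.FullSubcategory Q where
  obj M := ⟨k M, hk M⟩
  map {M M'} f := ObjectProperty.homMk (lift Q k ε uni (hk M) (ε M ≫ f))
  map_id M := by
    ext
    symm
    apply lift_uniq
    show 𝟙 (k M) ≫ ε M = ε M ≫ 𝟙 M
    simp
  map_comp {M M' M''} f g := by
    ext
    symm
    apply lift_uniq
    show (lift Q k ε uni (hk M) (ε M ≫ f) ≫ lift Q k ε uni (hk M') (ε M' ≫ g)) ≫ ε M'' = _
    rw [Category.assoc, lift_fac, ← Category.assoc, lift_fac, Category.assoc]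

lemma RA_map_fac {M M' : C} (f : M ⟶ M') :
    (show k M ⟶ k M' from ((RA Q k hk ε uni).map f).hom) ≫ ε M' = ε M ≫ f :=
  lift_fac Q k ε uni (hk M) _

/-- The adjunction between the inclusion and `RA`. -/
noncomputable def adjA : ObjectProperty.ι Q ⊣ RA Q k hk ε uni :=
  Adjunction.mkOfHomEquiv
    { homEquiv := fun X M => (Equiv.ofBijective _ (uni M X.obj X.property)).symm.trans
          ((ObjectProperty.fullyFaithfulι Q).homEquiv (X := X) (Y := (RA Q k hk ε uni).obj M)).symm
      homEquiv_naturality_left_symm := fun {X' X M} f g => by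
        show (ObjectProperty.ι Q).map (f ≫ g) ≫ ε M =
          (ObjectProperty.ι Q).map f ≫ ((ObjectProperty.ι Q).map g ≫ ε M)
        rw [Functor.map_comp]; exact Category.assoc _ _ _
      homEquiv_naturality_right := fun {X M M'} f g => by
        apply InducedCategory.hom_ext
        show lift Q k ε uni X.property (f ≫ g) =
          lift Q k ε uni X.property f ≫ ((RA Q k hk ε uni).map g).hom
        refine (lift_uniq Q k ε uni X.property (f ≫ g) _ ?_).symm
        show (lift Q k ε uni X.property f ≫
          (show k M ⟶ k M' from ((RA Q k hk ε uni).map g).hom)) ≫ ε M' = f ≫ g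
        rw [Category.assoc, RA_map_fac, ← Category.assoc, lift_fac] }

end Adj

section Triang

variable {C : Type w} [Category.{z} C] [HasZeroObject C] [HasShift C ℤ]
  [Preadditive C] [∀ n : ℤ, (shiftFunctor C n).Additive] [Pretriangulated C]

lemma shift_hom_zero_of (n m : ℤ) (h : n + m = 0) {X N : C}
    (H : ∀ f : X ⟶ N⟦m⟧, f = 0) : ∀ f : X⟦n⟧ ⟶ N, f = 0 := by
  intro f
  have hg : (shiftFunctorCompIsoId C n m h).inv.app X ≫ f⟦m⟧' = 0 := H _
  apply (shiftFunctor C m).map_injective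
  rw [Functor.map_zero]
  have h2 := congrArg (fun t => (shiftFunctorCompIsoId C n m h).hom.app X ≫ t) hg
  simpa using h2

lemma hom_shift_zero_of (n m : ℤ) (h : n + m = 0) {X N : C}
    (H : ∀ f : N⟦m⟧ ⟶ X, f = 0) : ∀ f : N ⟶ X⟦n⟧, f = 0 := by
  intro f
  have hg : f⟦m⟧' ≫ (shiftFunctorCompIsoId C n m h).hom.app X = 0 := H _
  apply (shiftFunctor C m).map_injective
  rw [Functor.map_zero]
  have h2 := congrArg (fun t => t ≫ (shiftFunctorCompIsoId C n m h).inv.app X) hg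
  simpa using h2

variable (T : Triangle C) (hT : T ∈ distTriang C)
include hT

lemma bij_postcomp_mor₁ {X : C} (h3 : ∀ f : X ⟶ T.obj₃, f = 0)
    (h3' : ∀ f : X ⟶ T.obj₃⟦(-1 : ℤ)⟧, f = 0) :
    Function.Bijective (fun g : X ⟶ T.obj₁ => g ≫ T.mor₁) := by
  constructor
  · intro g g' hgg'
    have hsub : (g - g') ≫ T.mor₁ = 0 := by
      rw [Preadditive.sub_comp, sub_eq_zero]; exact hgg'
    obtain ⟨h, hh⟩ := Triangle.coyoneda_exact₂ T.invRotate (inv_rot_of_distTriang T hT)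
      (g - g') hsub
    exact sub_eq_zero.1 (by rw [hh, h3' h]; exact zero_comp)
  · intro φ
    obtain ⟨g, hg⟩ := Triangle.coyoneda_exact₂ T hT φ (h3 _)
    exact ⟨g, hg.symm⟩

lemma bij_precomp_mor₁ {N : C} (h3 : ∀ f : T.obj₃ ⟶ N, f = 0)
    (h3' : ∀ f : T.obj₃⟦(-1 : ℤ)⟧ ⟶ N, f = 0) :
    Function.Bijective (fun f : T.obj₂ ⟶ N => T.mor₁ ≫ f) := by
  constructor
  · intro f f' hff'
    have hsub : T.mor₁ ≫ (f - f') = 0 := by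
      rw [Preadditive.comp_sub, sub_eq_zero]; exact hff'
    obtain ⟨h, hh⟩ := Triangle.yoneda_exact₂ T hT (f - f') hsub
    rw [h3 h, comp_zero] at hh
    exact sub_eq_zero.1 hh
  · intro u
    obtain ⟨g, hg⟩ := Triangle.yoneda_exact₂ T.invRotate (inv_rot_of_distTriang T hT) u (h3' _)
    exact ⟨g, hg.symm⟩

lemma bij_postcomp_mor₂ {X : C} (h1 : ∀ f : X ⟶ T.obj₁, f = 0)
    (h1' : ∀ f : X ⟶ T.obj₁⟦(1 : ℤ)⟧, f = 0) :
    Function.Bijective (fun g : X ⟶ T.obj₂ => g ≫ T.mor₂) := by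
  constructor
  · intro g g' hgg'
    have hsub : (g - g') ≫ T.mor₂ = 0 := by
      rw [Preadditive.sub_comp, sub_eq_zero]; exact hgg'
    obtain ⟨h, hh⟩ := Triangle.coyoneda_exact₂ T hT (g - g') hsub
    rw [h1 h, zero_comp] at hh
    exact sub_eq_zero.1 hh
  · intro φ
    obtain ⟨g, hg⟩ := Triangle.coyoneda_exact₃ T hT φ (h1' _)
    exact ⟨g, hg.symm⟩

lemma obj₁_hom_zero (Q : C → Prop) (hQ : ∀ (X : C) (n : ℤ), Q X → Q (X⟦n⟧))
    (hbij : ∀ N, Q N → Function.Bijective (fun g : T.obj₃ ⟶ N => T.mor₂ ≫ g)) :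
    ∀ N, Q N → ∀ f : T.obj₁ ⟶ N, f = 0 := by
  intro N hN f
  have hv : T.mor₃ ≫ f⟦(1 : ℤ)⟧' = 0 := by
    apply (hbij (N⟦(1 : ℤ)⟧) (hQ N 1 hN)).injective
    show T.mor₂ ≫ T.mor₃ ≫ f⟦(1 : ℤ)⟧' = T.mor₂ ≫ 0
    rw [comp_zero, ← Category.assoc, comp_distTriang_mor_zero₂₃ T hT, zero_comp]
  obtain ⟨g, hg⟩ := Triangle.yoneda_exact₂ T.rotate.rotate
    (rot_of_distTriang _ (rot_of_distTriang _ hT)) (f⟦(1 : ℤ)⟧') (by exact hv)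
  obtain ⟨g₀, hg₀⟩ := (shiftFunctor C (1 : ℤ)).map_surjective g
  obtain ⟨h, hh⟩ := (hbij N hN).surjective g₀
  have hgeq : g = (T.mor₂ ≫ h)⟦(1 : ℤ)⟧' := by
    rw [← hg₀]
    congr 1
    exact hh.symm
  apply (shiftFunctor C (1 : ℤ)).map_injective
  rw [Functor.map_zero, hg, hgeq]
  have hrr : T.rotate.rotate.mor₂ = -T.mor₁⟦(1 : ℤ)⟧' := by simp [Triangle.rotate]; rfl
  erw [hrr, Functor.map_comp, Preadditive.neg_comp, neg_eq_zero, ← Category.assoc,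
    ← Functor.map_comp, comp_distTriang_mor_zero₁₂ T hT, Functor.map_zero, zero_comp]
  rfl

lemma obj₃_hom_zero (Q : C → Prop) (hQ : ∀ (X : C) (n : ℤ), Q X → Q (X⟦n⟧))
    (hbij : ∀ N, Q N → Function.Bijective (fun g : N ⟶ T.obj₁ => g ≫ T.mor₁)) :
    ∀ N, Q N → ∀ f : N ⟶ T.obj₃, f = 0 := by
  intro N hN f
  have hw : (f ≫ T.mor₃)⟦(-1 : ℤ)⟧' ≫
      (shiftFunctorCompIsoId C (1 : ℤ) (-1 : ℤ) (by omega)).hom.app T.obj₁ = 0 := by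
    apply (hbij (N⟦(-1 : ℤ)⟧) (hQ N (-1) hN)).injective
    show _ ≫ T.mor₁ = (0 : N⟦(-1 : ℤ)⟧ ⟶ T.obj₁) ≫ T.mor₁
    rw [zero_comp]
    have nat := (shiftFunctorCompIsoId C (1 : ℤ) (-1 : ℤ) (by omega)).hom.naturality T.mor₁
    simp only [Functor.id_map, Functor.comp_map] at nat
    rw [Category.assoc, ← nat, ← Category.assoc, ← Functor.map_comp]
    have hv0 : (f ≫ T.mor₃) ≫ T.mor₁⟦(1 : ℤ)⟧' = 0 := by
      rw [Category.assoc, comp_distTriang_mor_zero₃₁ T hT, comp_zero]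
    rw [hv0, Functor.map_zero, zero_comp]
  have hw' : f ≫ T.mor₃ = 0 := by
    apply (shiftFunctor C (-1 : ℤ)).map_injective
    rw [Functor.map_zero]
    rw [← cancel_mono ((shiftFunctorCompIsoId C (1 : ℤ) (-1 : ℤ) (by omega)).hom.app T.obj₁)]
    rw [hw, zero_comp]
  obtain ⟨g, hg⟩ := Triangle.coyoneda_exact₃ T hT f hw'
  obtain ⟨g', hg'⟩ := (hbij N hN).surjective g
  rw [hg, ← hg']
  show (g' ≫ T.mor₁) ≫ T.mor₂ = 0
  rw [Category.assoc, comp_distTriang_mor_zero₁₂ T hT, comp_zero]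

end Triang

section Ortho

variable {C : Type w} [Category.{z} C] [HasZeroObject C] [HasShift C ℤ]
  [Preadditive C] [∀ n : ℤ, (shiftFunctor C n).Additive] [Pretriangulated C]
variable (S : ObjectProperty C) [S.IsTriangulated]

lemma Lo_shift (X : C) (n : ℤ) (hX : leftOrthogonal S X) :
    leftOrthogonal S (X⟦n⟧) := by
  intro N hN
  exact shift_hom_zero_of n (-n) (by omega) (fun f => hX _ (S.le_shift (-n) N hN) f)

lemma Ro_shift (X : C) (n : ℤ) (hX : rightOrthogonal S X) :
    rightOrthogonal S (X⟦n⟧) := by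
  intro N hN
  exact hom_shift_zero_of n (-n) (by omega) (fun f => hX _ (S.le_shift (-n) N hN) f)

variable {L : C ⥤ ObjectProperty.FullSubcategory S} (adj : L ⊣ ObjectProperty.ι S)

include adj in
lemma unit_bij (M : C) (N : C) (hN : S N) :
    Function.Bijective
      (fun g : (ObjectProperty.ι S).obj (L.obj M) ⟶ N => adj.unit.app M ≫ g) := by
  have he : (fun g : (ObjectProperty.ι S).obj (L.obj M) ⟶ N =>
      adj.unit.app M ≫ g) = (adj.homEquiv M ⟨N, hN⟩) ∘ InducedCategory.homEquiv.symm := by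
    funext g
    rw [Function.comp_apply, Adjunction.homEquiv_unit]
    rfl
  rw [he]
  exact (adj.homEquiv M ⟨N, hN⟩).bijective.comp InducedCategory.homEquiv.symm.bijective

include adj in
lemma exists_proj (M : C) :
    ∃ (K : C) (_ : leftOrthogonal S K) (ε : K ⟶ M),
      (∀ X, leftOrthogonal S X → Function.Bijective (fun g : X ⟶ K => g ≫ ε)) ∧
      (∀ N, rightOrthogonal S N → Function.Bijective (fun f : M ⟶ N => ε ≫ f)) := by
  obtain ⟨K, ε, δ, hT⟩ := Pretriangulated.distinguished_cocone_triangle₁ (adj.unit.app M)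
  refine ⟨K, ?_, ε, ?_, ?_⟩
  · exact fun N hN f =>
      obj₁_hom_zero _ hT S (fun X n h => S.le_shift n X h) (fun N' hN' => unit_bij S adj M N' hN') N hN f
  · intro X hX
    exact bij_postcomp_mor₁ _ hT (fun f => hX _ (L.obj M).property f)
      (fun f => hX _ (S.le_shift (-1) _ (L.obj M).property) f)
  · intro N hN
    exact bij_precomp_mor₁ _ hT (fun f => hN _ (L.obj M).property f)
      (fun f => hN _ (S.le_shift (-1) _ (L.obj M).property) f)

variable (K : C → C) (hK : ∀ M, leftOrthogonal S (K M)) (eps : ∀ M, K M ⟶ M)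
variable (uni : ∀ M (X : C), leftOrthogonal S X →
  Function.Bijective (fun g : X ⟶ K M => g ≫ eps M))
variable (epsbij : ∀ M (N : C), rightOrthogonal S N →
  Function.Bijective (fun f : M ⟶ N => eps M ≫ f))

include hK eps uni in
/-- Essential surjectivity data, given a right adjoint of the inclusion of `D`. -/
lemma essSurj_aux (ρ : C ⥤ ObjectProperty.FullSubcategory S)
    (adj2 : ObjectProperty.ι S ⊣ ρ) (Y : C) (hY : leftOrthogonal S Y) :
    ∃ (B : C), rightOrthogonal S B ∧ Nonempty (K B ≅ Y) := by
  obtain ⟨Cc, c, d, hT₂⟩ := Pretriangulated.distinguished_cocone_triangle (adj2.counit.app Y)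
  have counit_bij : ∀ N : C, S N → Function.Bijective
      (fun g : N ⟶ (ObjectProperty.ι S).obj (ρ.obj Y) => g ≫ adj2.counit.app Y) := by
    intro N hN
    have he : (fun g : N ⟶ (ObjectProperty.ι S).obj (ρ.obj Y) =>
        g ≫ adj2.counit.app Y) = (adj2.homEquiv ⟨N, hN⟩ Y).symm ∘ InducedCategory.homEquiv.symm := by
      funext g
      rw [Function.comp_apply, Adjunction.homEquiv_counit]
      rfl
    rw [he]
    exact (adj2.homEquiv ⟨N, hN⟩ Y).symm.bijective.comp InducedCategory.homEquiv.symm.bijective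
  have hC : rightOrthogonal S Cc :=
    fun N hN f => obj₃_hom_zero _ hT₂ S (fun X n h => S.le_shift n X h) counit_bij N hN f
  have b : ∀ X : C, leftOrthogonal S X →
      Function.Bijective (fun g : X ⟶ Y => g ≫ c) := by
    intro X hX
    exact bij_postcomp_mor₂ _ hT₂ (fun q => hX _ (ρ.obj Y).property q)
      (fun q => hX _ (S.le_shift 1 _ (ρ.obj Y).property) q)
  obtain ⟨α, hα⟩ := (uni Cc Y hY).surjective c
  obtain ⟨β, hβ⟩ := (b (K Cc) (hK Cc)).surjective (eps Cc)
  have hα' : α ≫ eps Cc = c := hα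
  have hβ' : β ≫ c = eps Cc := hβ
  have hβα : β ≫ α = 𝟙 (K Cc) := by
    apply (uni Cc (K Cc) (hK Cc)).injective
    show (β ≫ α) ≫ eps Cc = 𝟙 (K Cc) ≫ eps Cc
    rw [Category.assoc, hα', hβ', Category.id_comp]
  have hαβ : α ≫ β = 𝟙 Y := by
    apply (b Y hY).injective
    show (α ≫ β) ≫ c = 𝟙 Y ≫ c
    rw [Category.assoc, hβ', hα', Category.id_comp]
  exact ⟨Cc, hC, ⟨⟨β, α, hβα, hαβ⟩⟩⟩

include adj hK eps uni epsbij in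
/-- Construction of the universal morphism from `D` to `M`, given essential surjectivity of
the restriction to the right orthogonal. -/
lemma exists_projP
    (hsurj : ∀ Y : C, leftOrthogonal S Y →
      ∃ B : C, rightOrthogonal S B ∧ Nonempty (K B ≅ Y)) (M : C) :
    ∃ (Kp : C) (_ : S Kp) (εp : Kp ⟶ M),
      ∀ X, S X → Function.Bijective (fun g : X ⟶ Kp => g ≫ εp) := by
  obtain ⟨B, hB, ⟨ψ⟩⟩ := hsurj (K M) (hK M)
  obtain ⟨u, hu⟩ := (epsbij M B hB).surjective (ψ.inv ≫ eps B)
  have hu' : eps M ≫ u = ψ.inv ≫ eps B := hu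
  obtain ⟨N₀, f, h, hT₃⟩ := Pretriangulated.distinguished_cocone_triangle₁ u
  have ubij : ∀ B' : C, rightOrthogonal S B' →
      Function.Bijective (fun t : B ⟶ B' => u ≫ t) := by
    intro B' hB'
    constructor
    · intro t t' htt'
      apply (epsbij B B' hB').injective
      show eps B ≫ t = eps B ≫ t'
      have h1 : (ψ.inv ≫ eps B) ≫ t = (ψ.inv ≫ eps B) ≫ t' := by
        rw [← hu', Category.assoc, Category.assoc]
        exact congrArg (fun w => eps M ≫ w) htt'
      rw [Category.assoc, Category.assoc] at h1
      exact (cancel_epi ψ.inv).1 h1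
    · intro φ
      obtain ⟨t, ht⟩ := (epsbij B B' hB').surjective (ψ.hom ≫ eps M ≫ φ)
      have ht' : eps B ≫ t = ψ.hom ≫ eps M ≫ φ := ht
      refine ⟨t, ?_⟩
      apply (epsbij M B' hB').injective
      show eps M ≫ u ≫ t = eps M ≫ φ
      rw [← Category.assoc, hu', Category.assoc, ht', ← Category.assoc, ψ.inv_hom_id,
        Category.id_comp]
  have hN₀ : ∀ B' : C, rightOrthogonal S B' → ∀ q : N₀ ⟶ B', q = 0 :=
    obj₁_hom_zero _ hT₃ (rightOrthogonal S) (Ro_shift S) ubij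
  -- the unit triangle at N₀
  obtain ⟨K', ε', δ', hT₄⟩ :=
    Pretriangulated.distinguished_cocone_triangle₁ (adj.unit.app N₀)
  have hK' : leftOrthogonal S K' := fun N hN q =>
    obj₁_hom_zero _ hT₄ S (fun X n h => S.le_shift n X h) (fun N' hN' => unit_bij S adj N₀ N' hN') N hN q
  have hK'Ro : ∀ B' : C, rightOrthogonal S B' → ∀ g : K' ⟶ B', g = 0 := by
    intro B' hB' g
    obtain ⟨t, ht⟩ := (bij_precomp_mor₁ _ hT₄ (fun q => hB' _ (L.obj N₀).property q)
      (fun q => hB' _ (S.le_shift (-1) _ (L.obj N₀).property) q)).surjective g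
    have ht' : ε' ≫ t = g := ht
    rw [← ht', hN₀ B' hB' t, comp_zero]
  obtain ⟨B₀, hB₀, ⟨ψ₀⟩⟩ := hsurj K' hK'
  have hinv0 : ψ₀.inv = 0 := by
    apply (uni B₀ K' hK').injective
    show ψ₀.inv ≫ eps B₀ = (0 : K' ⟶ K B₀) ≫ eps B₀
    rw [zero_comp]
    exact hK'Ro B₀ hB₀ _
  have hidK' : 𝟙 K' = 0 := by rw [← ψ₀.inv_hom_id, hinv0, zero_comp]
  have hz1 : IsZero (K'⟦(1 : ℤ)⟧) := by
    rw [IsZero.iff_id_eq_zero, ← CategoryTheory.Functor.map_id, hidK', Functor.map_zero]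
  have hzK' : IsZero K' := (IsZero.iff_id_eq_zero K').2 hidK'
  -- the unit at N₀ is an isomorphism
  obtain ⟨g, hg⟩ : ∃ g : (ObjectProperty.ι S).obj (L.obj N₀) ⟶ N₀,
      𝟙 ((ObjectProperty.ι S).obj (L.obj N₀)) = g ≫ adj.unit.app N₀ :=
    Triangle.coyoneda_exact₃ _ hT₄
    (𝟙 ((ObjectProperty.ι S).obj (L.obj N₀)))
    (by exact hz1.eq_zero_of_tgt _)
  have hg' : g ≫ adj.unit.app N₀ = 𝟙 ((ObjectProperty.ι S).obj (L.obj N₀)) :=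
    hg.symm
  have hsub : ((adj.unit.app N₀ ≫ g : N₀ ⟶ N₀) - 𝟙 N₀) ≫ adj.unit.app N₀ = 0 := by
    rw [Preadditive.sub_comp, Category.id_comp, Category.assoc, hg']
    exact sub_eq_zero.2 (Category.comp_id _)
  obtain ⟨q, hq⟩ := Triangle.coyoneda_exact₂ _ hT₄
    ((adj.unit.app N₀ ≫ g : N₀ ⟶ N₀) - 𝟙 N₀) hsub
  have hq' : (adj.unit.app N₀ ≫ g : N₀ ⟶ N₀) - 𝟙 N₀ = q ≫ ε' := hq
  have hηg : adj.unit.app N₀ ≫ g = 𝟙 N₀ := by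
    rw [← sub_eq_zero, hq', hzK'.eq_zero_of_tgt q]; exact zero_comp
  haveI : IsIso (adj.unit.app N₀) := ⟨g, hηg, hg'⟩
  refine ⟨(L.obj N₀).obj, (L.obj N₀).property, inv (adj.unit.app N₀) ≫ f, ?_⟩
  intro X hX
  have base : Function.Bijective (fun g : X ⟶ N₀ => g ≫ f) :=
    bij_postcomp_mor₁ _ hT₃ (fun q => hB X hX q) (fun q => Ro_shift S B (-1) hB X hX q)
  have hco : (fun g : X ⟶ (L.obj N₀).obj => g ≫ (inv (adj.unit.app N₀) ≫ f)) =
      (fun g : X ⟶ N₀ => g ≫ f) ∘ (fun g : X ⟶ (L.obj N₀).obj => g ≫ inv (adj.unit.app N₀)) := by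
    funext g
    exact (Category.assoc _ _ _).symm
  rw [hco]
  exact base.comp ((asIso (adj.unit.app N₀)).symm.homToEquiv).bijective

end Ortho

end Stmt0Aux

theorem stmt0 {D' : Type u} [Category.{v} D'] [HasZeroObject D'] [HasShift D' ℤ]
    [Preadditive D'] [∀ n : ℤ, (shiftFunctor D' n).Additive] [Pretriangulated D']
    (S : ObjectProperty D') [S.IsTriangulated]
    -- `D` is left admissible: the inclusion `D ↪ D'` admits a left adjoint,
    -- i.e. the inclusion is a right adjoint.
    (hadm : (ObjectProperty.ι S).IsRightAdjoint) :
    ∃ (R : D' ⥤ ObjectProperty.FullSubcategory (leftOrthogonal S))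
      (_ : ObjectProperty.ι (leftOrthogonal S) ⊣ R),
      -- the restriction of `R` to the right orthogonal `D^⊥` is fully faithful ...
      (ObjectProperty.ι (rightOrthogonal S) ⋙ R).Full ∧
      (ObjectProperty.ι (rightOrthogonal S) ⋙ R).Faithful ∧
      -- ... and it is an equivalence iff `D` is right admissible (the inclusion `D ↪ D'`
      -- admits a right adjoint, i.e. the inclusion is a left adjoint).
      ((ObjectProperty.ι (rightOrthogonal S) ⋙ R).IsEquivalence ↔
        (ObjectProperty.ι S).IsLeftAdjoint) := by
  obtain ⟨L, ⟨adj⟩⟩ := hadm.exists_leftAdjoint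
  choose K hK eps uni epsbij using Stmt0Aux.exists_proj S adj
  set Lo := leftOrthogonal S with hLo
  set R := Stmt0Aux.RA Lo K hK eps uni with hR
  have hFull : (ObjectProperty.ι (rightOrthogonal S) ⋙ R).Full := by
    refine ⟨fun {B B'} g => ?_⟩
    obtain ⟨f, hf⟩ := (epsbij B.obj B'.obj B'.property).surjective
      (g.hom ≫ eps B'.obj)
    exact ⟨ObjectProperty.homMk f, InducedCategory.hom_ext
      (Stmt0Aux.lift_uniq Lo K eps uni (hK B.obj) (eps B.obj ≫ f) g.hom hf.symm).symm⟩
  have hFaith : (ObjectProperty.ι (rightOrthogonal S) ⋙ R).Faithful := by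
    refine ⟨fun {B B'} f f' hff' => ?_⟩
    apply InducedCategory.hom_ext
    apply (epsbij B.obj B'.obj B'.property).injective
    show eps B.obj ≫ f.hom = eps B.obj ≫ f'.hom
    rw [← Stmt0Aux.RA_map_fac Lo K hK eps uni f.hom, ← Stmt0Aux.RA_map_fac Lo K hK eps uni f'.hom]
    exact congrArg (fun t => (show K B.obj ⟶ K B'.obj from t.hom) ≫ eps B'.obj) hff'
  refine ⟨R, Stmt0Aux.adjA Lo K hK eps uni, hFull, hFaith, ?_, ?_⟩
  · -- equivalence → right admissible
    intro heq
    have hES : (ObjectProperty.ι (rightOrthogonal S) ⋙ R).EssSurj := heq.essSurj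
    have hsurj : ∀ Y : D', leftOrthogonal S Y →
        ∃ B : D', rightOrthogonal S B ∧ Nonempty (K B ≅ Y) := by
      intro Y hY
      obtain ⟨B, ⟨φ⟩⟩ := hES.mem_essImage ⟨Y, hY⟩
      exact ⟨B.obj, B.property,
        ⟨(ObjectProperty.ι (leftOrthogonal S)).mapIso φ⟩⟩
    choose Kp hKp epsp unip using
      Stmt0Aux.exists_projP S adj K hK eps uni epsbij hsurj
    exact ⟨⟨Stmt0Aux.RA S Kp hKp epsp unip, ⟨Stmt0Aux.adjA S Kp hKp epsp unip⟩⟩⟩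
  · -- right admissible → equivalence
    intro hladj
    obtain ⟨ρ, ⟨adj2⟩⟩ := hladj.exists_rightAdjoint
    have hES : (ObjectProperty.ι (rightOrthogonal S) ⋙ R).EssSurj := by
      refine ⟨fun Y => ?_⟩
      obtain ⟨B, hB, ⟨iso⟩⟩ := Stmt0Aux.essSurj_aux S K hK eps uni ρ adj2 Y.obj Y.property
      exact ⟨⟨B, hB⟩, ⟨ObjectProperty.isoMk _ iso⟩⟩
    exact { faithful := hFaith, full := hFull, essSurj := hES }
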